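/- Let (C_i, F_ij, θ_ijk) be a Cat-inverse system over a directed set I with concrete inverse limit (C, Φ_i, Θ_ij). Let e : x → x be an idempotent in C and let s : x → y and r : y → x be morphisms in C with r ∘ s = e and s ∘ r = id_y. If x is a firm object, then y is a firm object. -/

import Mathlib

open CategoryTheory CategoryTheory.Limits

/-- A `Cat`-inverse system over a directed set `ι`: small categories `C i`,
functors `F h : C j ⥤ C i` for `h : i < j`, and natural isomorphisms
`theta hij hjk : F hjk ⋙ F hij ≅ F (hij.trans hjk)` satisfying the cocycle condition. -/
structure CatInvSys (ι : Type) [Preorder ι] where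
  C : ι → Type
  [cat : ∀ i, SmallCategory (C i)]
  F : ∀ {i j : ι}, i < j → (C j ⥤ C i)
  theta : ∀ {i j k : ι} (hij : i < j) (hjk : j < k), F hjk ⋙ F hij ≅ F (hij.trans hjk)
  theta_comp :
    ∀ {i j k l : ι} (hij : i < j) (hjk : j < k) (hkl : k < l) (x : C l),
      (F hij).map ((theta hjk hkl).hom.app x) ≫ (theta hij (hjk.trans hkl)).hom.app x =
        (theta hij hjk).hom.app ((F hkl).obj x) ≫ (theta (hij.trans hjk) hkl).hom.app x

attribute [instance] CatInvSys.cat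

variable {ι : Type} [Preorder ι]

/-- An object of the concrete inverse limit: a family of objects `pt i ∈ C i` together with
isomorphisms `f h : F h (pt j) ⟶ pt i` compatible with the natural isomorphisms `theta`. -/
structure LimObj (S : CatInvSys ι) where
  pt : ∀ i, S.C i
  f : ∀ {i j : ι} (h : i < j), (S.F h).obj (pt j) ⟶ pt i
  f_isIso : ∀ {i j : ι} (h : i < j), IsIso (f h)
  compat : ∀ {i j k : ι} (hij : i < j) (hjk : j < k),
    (S.F hij).map (f hjk) ≫ f hij = (S.theta hij hjk).hom.app (pt k) ≫ f (hij.trans hjk)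

/-- A morphism in the concrete inverse limit: a compatible family of morphisms. -/
structure LimHom {S : CatInvSys ι} (x y : LimObj S) where
  s : ∀ i, x.pt i ⟶ y.pt i
  nat : ∀ {i j : ι} (h : i < j), (S.F h).map (s j) ≫ y.f h = x.f h ≫ s i

theorem LimHom.ext' {S : CatInvSys ι} {x y : LimObj S} {φ ψ : LimHom x y}
    (h : ∀ i, φ.s i = ψ.s i) : φ = ψ := by
  have hs : φ.s = ψ.s := funext h
  cases φ with
  | mk s nat =>
    cases ψ with
    | mk s' nat' =>
      dsimp at hs
      subst hs
      rfl

/-- The concrete inverse limit category. -/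
instance limCategory (S : CatInvSys ι) : Category (LimObj S) where
  Hom := LimHom
  id x := ⟨fun _ => 𝟙 _, by intro i j h; simp⟩
  comp φ ψ := ⟨fun i => φ.s i ≫ ψ.s i, by
    intro i j h
    rw [Functor.map_comp, Category.assoc, ψ.nat h, ← Category.assoc, φ.nat h, Category.assoc]⟩
  id_comp φ := LimHom.ext' fun _ => Category.id_comp _
  comp_id φ := LimHom.ext' fun _ => Category.comp_id _
  assoc φ ψ χ := LimHom.ext' fun _ => Category.assoc _ _ _

@[simp] theorem LimHom.comp_s {S : CatInvSys ι} {x y z : LimObj S} (φ : x ⟶ y) (ψ : y ⟶ z)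
    (i : ι) : (LimHom.s (φ ≫ ψ) i) = LimHom.s φ i ≫ LimHom.s ψ i := rfl

@[simp] theorem LimHom.id_s {S : CatInvSys ι} (x : LimObj S) (i : ι) :
    LimHom.s (𝟙 x) i = 𝟙 (x.pt i) := rfl

/-- The projection functor `Φ i` from the concrete inverse limit to `C i`. -/
def Phi (S : CatInvSys ι) (i : ι) : LimObj S ⥤ S.C i where
  obj x := x.pt i
  map φ := LimHom.s φ i
  map_id _ := rfl
  map_comp _ _ := rfl

/-- The natural isomorphism `Θ h : Φ j ⋙ F h ≅ Φ i`, whose component at an object is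
the structure isomorphism of that object. -/
noncomputable def Theta (S : CatInvSys ι) {i j : ι} (h : i < j) : Phi S j ⋙ S.F h ≅ Phi S i :=
  NatIso.ofComponents (fun x => @asIso _ _ _ _ (x.f h) (x.f_isIso h))
    (fun {x y} φ => LimHom.nat φ h)

/-- `t` witnesses firmness of the object `x` of the concrete inverse limit. -/
def FirmWitness (S : CatInvSys ι) (x : LimObj S) (t : ι) : Prop :=
  ∀ (u : ι) (htu : t < u) (a b : S.C u),
    Function.Bijective (fun φ : (Phi S u).obj x ⟶ b => (S.F htu).map φ) ∧
    Function.Bijective (fun φ : a ⟶ (Phi S u).obj x => (S.F htu).map φ)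

/-- An object of the concrete inverse limit is firm if it admits a firmness witness. -/
def Firm (S : CatInvSys ι) (x : LimObj S) : Prop := ∃ t : ι, FirmWitness S x t

/-- If `e : x ⟶ x` is an idempotent in the concrete inverse limit and `s : x ⟶ y`,
`r : y ⟶ x` satisfy `s ≫ r = e` (i.e. `r ∘ s = e`) and `r ≫ s = 𝟙 y` (i.e. `s ∘ r = id`),
then firmness of `x` implies firmness of `y`. -/
theorem firm_of_retract {ι : Type} [Preorder ι] [IsDirected ι (· ≤ ·)] (S : CatInvSys ι)
    {x y : LimObj S} (e : x ⟶ x) (_ : e ≫ e = e)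
    (s : x ⟶ y) (r : y ⟶ x) (_ : s ≫ r = e) (_ : r ≫ s = 𝟙 y) :
    Firm S x → Firm S y := by
  rename_i hee hsr hrsy
  rintro ⟨t, ht⟩
  refine ⟨t, fun u htu a b => ?_⟩
  show Function.Bijective (fun φ : @Quiver.Hom (S.C u) CategoryStruct.toQuiver (y.pt u) b =>
      (S.F htu).map φ) ∧
    Function.Bijective (fun φ : @Quiver.Hom (S.C u) CategoryStruct.toQuiver a (y.pt u) =>
      (S.F htu).map φ)
  obtain ⟨hx1, hx2⟩ : Function.Bijective
      (fun φ : @Quiver.Hom (S.C u) CategoryStruct.toQuiver (x.pt u) b => (S.F htu).map φ) ∧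
    Function.Bijective
      (fun φ : @Quiver.Hom (S.C u) CategoryStruct.toQuiver a (x.pt u) => (S.F htu).map φ) :=
    ht u htu a b
  have hrs : LimHom.s r u ≫ LimHom.s s u = 𝟙 (y.pt u) := by
    have := congrArg (fun φ : y ⟶ y => LimHom.s φ u) hrsy
    simpa using this
  constructor
  · constructor
    · intro φ ψ h
      dsimp at h
      have h2 : (S.F htu).map (LimHom.s s u ≫ φ) = (S.F htu).map (LimHom.s s u ≫ ψ) := by
        simp only [Functor.map_comp, h]
      have h3 := hx1.1 h2
      calc φ = (LimHom.s r u ≫ LimHom.s s u) ≫ φ := by rw [hrs]; simp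
        _ = LimHom.s r u ≫ (LimHom.s s u ≫ φ) := by simp
        _ = LimHom.s r u ≫ (LimHom.s s u ≫ ψ) := by rw [h3]
        _ = ψ := by rw [← Category.assoc, hrs]; simp
    · intro g
      obtain ⟨φ, hφ⟩ := hx1.2 ((S.F htu).map (LimHom.s s u) ≫ g)
      refine ⟨LimHom.s r u ≫ φ, ?_⟩
      dsimp at hφ ⊢
      rw [Functor.map_comp, hφ, ← Category.assoc, ← Functor.map_comp, hrs,
        CategoryTheory.Functor.map_id (S.F htu) (y.pt u)]
      exact Category.id_comp g
  · constructor
    · intro φ ψ h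
      dsimp at h
      have h2 : (S.F htu).map (φ ≫ LimHom.s r u) = (S.F htu).map (ψ ≫ LimHom.s r u) := by
        simp only [Functor.map_comp, h]
      have h3 := hx2.1 h2
      calc φ = φ ≫ (LimHom.s r u ≫ LimHom.s s u) := by rw [hrs]; exact (Category.comp_id φ).symm
        _ = (φ ≫ LimHom.s r u) ≫ LimHom.s s u := by simp
        _ = (ψ ≫ LimHom.s r u) ≫ LimHom.s s u := by rw [h3]
        _ = ψ := by rw [Category.assoc, hrs]; exact Category.comp_id ψ
    · intro g
      obtain ⟨φ, hφ⟩ := hx2.2 (g ≫ (S.F htu).map (LimHom.s r u))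
      refine ⟨φ ≫ LimHom.s s u, ?_⟩
      dsimp at hφ ⊢
      rw [Functor.map_comp, hφ, Category.assoc, ← Functor.map_comp, hrs,
        CategoryTheory.Functor.map_id (S.F htu) (y.pt u)]
      exact Category.comp_id g
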